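/- Let p ≥ 1 and let M = diag(m₁,…,m_p) be a diagonal matrix with mᵢ > 0 for all i. Then M − 𝟙_p 𝟙_pᵀ is positive definite if and only if ∑_{i=1}^{p} 1/mᵢ < 1, where 𝟙_p is the all-ones vector in ℝᵖ. -/

import Mathlib

open Matrix

/-- for a positive diagonal matrix `M = diag(m)`, the matrix
`M - 𝟙𝟙ᵀ` is positive definite iff `∑ᵢ 1/mᵢ < 1`. -/
theorem diagonal_sub_ones_posDef_iff (p : ℕ) (hp : 1 ≤ p)
    (m : Fin p → ℝ) (hm : ∀ i, 0 < m i) :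
    (Matrix.diagonal m - Matrix.vecMulVec (fun _ => 1) (fun _ => 1)).PosDef ↔
      ∑ i, (m i)⁻¹ < 1 := by
  have key : ∀ x : Fin p → ℝ,
      dotProduct (star x) ((Matrix.diagonal m - Matrix.vecMulVec (fun _ => 1) (fun _ => 1)) *ᵥ x)
        = ∑ i, m i * x i ^ 2 - (∑ i, x i) ^ 2 := by
    intro x
    have hent : ∀ i j, ((Matrix.diagonal m - Matrix.vecMulVec (fun _ => 1) (fun _ => 1)
        : Matrix (Fin p) (Fin p) ℝ)) i j
        = (if i = j then m i else 0) - 1 := by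
      intro i j
      simp [Matrix.diagonal_apply, vecMulVec_apply]
    simp only [star_trivial, dotProduct, mulVec, dotProduct, hent, sub_mul, ite_mul, zero_mul,
      one_mul, mul_sub, Finset.sum_sub_distrib, Finset.sum_ite_eq, Finset.mem_univ, if_true]
    rw [sq (∑ i, x i), Finset.sum_mul]
    congr 1
    · exact Finset.sum_congr rfl fun i _ => by ring
  constructor
  · intro h
    set S := ∑ i, (m i)⁻¹ with hS
    have hxne : (fun i => (m i)⁻¹) ≠ (0 : Fin p → ℝ) := by
      intro hcon
      have := congrFun hcon ⟨0, hp⟩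
      exact (inv_ne_zero (hm ⟨0, hp⟩).ne') this
    have h2 := h.dotProduct_mulVec_pos hxne
    rw [key] at h2
    have e1 : ∑ i, m i * ((m i)⁻¹) ^ 2 = S := by
      refine Finset.sum_congr rfl fun i _ => ?_
      rw [sq, ← mul_assoc, mul_inv_cancel₀ (hm i).ne', one_mul]
    rw [e1] at h2
    have hSpos : 0 < S := by
      refine Finset.sum_pos (fun i _ => inv_pos.mpr (hm i)) ?_
      exact Finset.univ_nonempty_iff.mpr ⟨⟨0, hp⟩⟩
    nlinarith
  · intro hS
    rw [posDef_iff_dotProduct_mulVec]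
    constructor
    · refine IsHermitian.sub (isHermitian_diagonal m) ?_
      ext i j
      simp [vecMulVec_apply]
    · intro x hx
      rw [key]
      obtain ⟨i0, hi0⟩ : ∃ i, x i ≠ 0 := by
        by_contra hcon
        push_neg at hcon
        exact hx (funext hcon)
      have hpos : 0 < ∑ i, m i * x i ^ 2 := by
        refine Finset.sum_pos' (fun i _ => mul_nonneg (hm i).le (sq_nonneg _)) ?_
        exact ⟨i0, Finset.mem_univ _, mul_pos (hm i0) (by positivity)⟩
      have cauchy : (∑ i, x i) ^ 2 ≤ (∑ i, (m i)⁻¹) * ∑ i, m i * x i ^ 2 := by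
        have := Finset.sum_mul_sq_le_sq_mul_sq Finset.univ
          (fun i => (Real.sqrt (m i))⁻¹) (fun i => Real.sqrt (m i) * x i)
        have e2 : ∀ i : Fin p, (Real.sqrt (m i))⁻¹ * (Real.sqrt (m i) * x i) = x i := by
          intro i
          rw [← mul_assoc, inv_mul_cancel₀ (Real.sqrt_ne_zero'.mpr (hm i)), one_mul]
        have e3 : ∀ i : Fin p, ((Real.sqrt (m i))⁻¹) ^ 2 = (m i)⁻¹ := by
          intro i
          rw [inv_pow, Real.sq_sqrt (hm i).le]
        have e4 : ∀ i : Fin p, (Real.sqrt (m i) * x i) ^ 2 = m i * x i ^ 2 := by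
          intro i
          rw [mul_pow, Real.sq_sqrt (hm i).le]
        simpa only [e2, Finset.sum_congr rfl fun i _ => e3 i,
          Finset.sum_congr rfl fun i _ => e4 i] using this
      refine sub_pos.mpr ?_
      calc (∑ i, x i) ^ 2 ≤ (∑ i, (m i)⁻¹) * ∑ i, m i * x i ^ 2 := cauchy
        _ < 1 * ∑ i, m i * x i ^ 2 := mul_lt_mul_of_pos_right hS hpos
        _ = ∑ i, m i * x i ^ 2 := one_mul _
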